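/- Let G be a connected graph and H a graph with at least one edge such that |V(G)| ≥ σ(H), where σ(H) is the smallest size of a colour class in a proper colouring of H with χ(H) colours. Then R(G, H) ≥ (|V(G)| − 1)(χ(H) − 1) + σ(H); that is, there exists a graph on (|V(G)| − 1)(χ(H) − 1) + σ(H) − 1 vertices containing no copy of G whose complement contains no copy of H. -/

import Mathlib

open SimpleGraph

/-- `ContainsCopy Γ H` : `Γ` contains a copy of `H`, i.e. `H` is isomorphic to a subgraph
of `Γ`; equivalently, there is an injective graph homomorphism from `H` to `Γ`. -/
def ContainsCopy {α β : Type*} (Γ : SimpleGraph α) (H : SimpleGraph β) : Prop :=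
  ∃ f : H →g Γ, Function.Injective f

/-- Burr's lower bound: if `G` is connected, `H` has an edge, `|V(G)| ≥ σ(H)`, where
`σ(H)` is the smallest size of a colour class over all proper colourings of `H` with
`χ(H)` colours, then `R(G,H) ≥ (|V(G)| − 1)(χ(H) − 1) + σ(H)`; that is, there is a graph
on `(|V(G)| − 1)(χ(H) − 1) + σ(H) − 1` vertices containing no copy of `G` whose
complement contains no copy of `H`. -/
theorem statement12 {V W : Type*} [Fintype V] [Fintype W]
    (G : SimpleGraph V) (H : SimpleGraph W)
    (hG : G.Connected) (hH : ∃ x y, H.Adj x y)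
    (k s : ℕ) (hk : H.chromaticNumber = k)
    (hs_min : ∀ C : H.Coloring (Fin k), ∀ i : Fin k,
      s ≤ (Finset.univ.filter fun w => C w = i).card)
    (hs_attained : ∃ C : H.Coloring (Fin k), ∃ i : Fin k,
      (Finset.univ.filter fun w => C w = i).card = s)
    (hVs : s ≤ Fintype.card V) :
    ∃ Γ : SimpleGraph (Fin ((Fintype.card V - 1) * (k - 1) + s - 1)),
      ¬ ContainsCopy Γ G ∧ ¬ ContainsCopy Γᶜ H := by
  classical
  obtain ⟨x₀, y₀, hxy⟩ := hH
  obtain ⟨C₀, i₀, hC₀⟩ := hs_attained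
  have hVne : Nonempty V := hG.nonempty
  have hn1 : 1 ≤ Fintype.card V := Fintype.card_pos
  -- k ≥ 2
  have hk2 : 2 ≤ k := by
    have h1 : 1 < Fintype.card (Fin k) :=
      Fintype.one_lt_card_iff.2 ⟨C₀ x₀, C₀ y₀, C₀.valid hxy⟩
    simp only [Fintype.card_fin] at h1
    omega
  -- s ≥ 1
  have hs1 : 1 ≤ s := by
    by_contra hs
    have hs0 : s = 0 := by omega
    subst hs0
    rw [Finset.card_eq_zero] at hC₀
    have hempty : ∀ w, C₀ w ≠ i₀ := by
      intro w hw
      have hmem : w ∈ Finset.univ.filter fun w => C₀ w = i₀ := by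
        simp [hw]
      rw [hC₀] at hmem
      exact absurd hmem (Finset.notMem_empty w)
    -- build a (k-1)-colouring
    have hcol : H.Colorable (k - 1) := by
      rw [H.colorable_iff_exists_bdd_nat_coloring]
      refine ⟨SimpleGraph.Coloring.mk
        (fun w => if (C₀ w : ℕ) < (i₀ : ℕ) then (C₀ w : ℕ) else (C₀ w : ℕ) - 1) ?_, ?_⟩
      · intro a b hab h
        have h1 : (C₀ a : ℕ) ≠ (C₀ b : ℕ) := Fin.val_ne_of_ne (C₀.valid hab)
        have h2 : (C₀ a : ℕ) ≠ (i₀ : ℕ) := Fin.val_ne_of_ne (hempty a)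
        have h3 : (C₀ b : ℕ) ≠ (i₀ : ℕ) := Fin.val_ne_of_ne (hempty b)
        split_ifs at h <;> omega
      · intro w
        have h1 : (C₀ w : ℕ) < k := (C₀ w).isLt
        have h2 : (i₀ : ℕ) < k := i₀.isLt
        have h3 : (C₀ w : ℕ) ≠ (i₀ : ℕ) := Fin.val_ne_of_ne (hempty w)
        show (if (C₀ w : ℕ) < (i₀ : ℕ) then (C₀ w : ℕ) else (C₀ w : ℕ) - 1) < k - 1
        split_ifs <;> omega
    have hle := hcol.chromaticNumber_le
    rw [hk] at hle
    have : k ≤ k - 1 := by exact_mod_cast hle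
    omega
  set n := Fintype.card V with hn_def
  set m := n - 1 with hm_def
  set N := m * (k - 1) + s - 1 with hN_def
  rcases Nat.eq_zero_or_pos N with hN0 | hNpos
  · refine ⟨⊥, ?_, ?_⟩
    · rintro ⟨f, -⟩
      obtain ⟨v⟩ := hVne
      have := (f v).isLt
      omega
    · rintro ⟨f, -⟩
      have := (f x₀).isLt
      omega
  -- main case
  have hm1 : 1 ≤ m := by
    rcases Nat.eq_zero_or_pos m with h | h
    · rw [h, Nat.zero_mul] at hN_def
      omega
    · exact h
  refine ⟨SimpleGraph.fromRel (fun x y => (x : ℕ) / m = (y : ℕ) / m), ?_, ?_⟩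
  · -- no copy of G
    rintro ⟨f, hf⟩
    have key : ∀ {a b : V}, G.Adj a b → ((f a : ℕ)) / m = ((f b : ℕ)) / m := by
      intro a b hab
      have h := f.map_adj hab
      rw [SimpleGraph.fromRel_adj] at h
      rcases h.2 with h2 | h2
      · exact h2
      · exact h2.symm
    have const : ∀ a b : V, ((f a : ℕ)) / m = ((f b : ℕ)) / m := by
      intro a b
      obtain ⟨p⟩ := hG.preconnected a b
      induction p with
      | nil => rfl
      | cons h _ ih => exact (key h).trans ih
    have hcard : (Finset.univ : Finset V).card ≤ (Finset.range m).card := by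
      apply Finset.card_le_card_of_injOn (fun v => (f v : ℕ) % m)
      · intro v _
        exact Finset.mem_range.mpr (Nat.mod_lt _ hm1)
      · intro a _ b _ hab
        have h1 : ((f a : ℕ)) / m = ((f b : ℕ)) / m := const a b
        have h2 : ((f a : ℕ)) % m = ((f b : ℕ)) % m := hab
        have heq : ((f a : ℕ)) = ((f b : ℕ)) := by
          conv_lhs => rw [← Nat.div_add_mod ((f a : ℕ)) m]
          conv_rhs => rw [← Nat.div_add_mod ((f b : ℕ)) m]
          rw [h1, h2]
        exact hf (Fin.val_injective heq)
    rw [Finset.card_univ, Finset.card_range] at hcard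
    omega
  · -- no copy of H in complement
    rintro ⟨f, hf⟩
    have hNle : N ≤ m * k := by
      have h1 : s - 1 ≤ m := by omega
      have h2 : m * (k - 1) + m = m * k := by
        have h3 : k - 1 + 1 = k := by omega
        calc m * (k - 1) + m = m * (k - 1 + 1) := by ring
          _ = m * k := by rw [h3]
      omega
    have hblk : ∀ x : Fin N, (x : ℕ) / m < k := by
      intro x
      rw [Nat.div_lt_iff_lt_mul hm1, Nat.mul_comm]
      exact lt_of_lt_of_le x.isLt hNle
    have hval : ∀ {a b : W}, H.Adj a b → ((f a : ℕ)) / m ≠ ((f b : ℕ)) / m := by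
      intro a b hab heq
      have h := f.map_adj hab
      rw [SimpleGraph.compl_adj] at h
      exact h.2 ((SimpleGraph.fromRel_adj _ _ _).mpr ⟨h.1, Or.inl heq⟩)
    set C : H.Coloring (Fin k) := SimpleGraph.Coloring.mk
      (fun w => ⟨(f w : ℕ) / m, hblk _⟩)
      (fun {a b} hab h => hval hab (by simpa [Fin.mk.injEq] using h)) with hC_def
    have hik : k - 1 < k := by omega
    have hcard := hs_min C ⟨k - 1, hik⟩
    have hTcard : (Finset.univ.filter fun w => C w = ⟨k - 1, hik⟩).card
        ≤ (Finset.range (s - 1)).card := by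
      apply Finset.card_le_card_of_injOn (fun w => (f w : ℕ) - m * (k - 1))
      · intro w hw
        rw [Finset.mem_coe, Finset.mem_filter] at hw
        have hCw : ((f w : ℕ)) / m = k - 1 := by
          have := hw.2
          rw [hC_def] at this
          simpa [SimpleGraph.Coloring.mk, Fin.mk.injEq] using congrArg Fin.val this
        have hge : m * (k - 1) ≤ (f w : ℕ) := by
          calc m * (k - 1) = m * ((f w : ℕ) / m) := by rw [hCw]
            _ ≤ (f w : ℕ) := Nat.mul_div_le _ _
        have hlt : (f w : ℕ) < N := (f w).isLt
        simp only [Finset.mem_coe, Finset.mem_range]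
        omega
      · intro a ha b hb hab
        rw [Finset.mem_coe, Finset.mem_filter] at ha hb
        have hCa : ((f a : ℕ)) / m = k - 1 := by
          have := ha.2
          rw [hC_def] at this
          simpa [SimpleGraph.Coloring.mk, Fin.mk.injEq] using congrArg Fin.val this
        have hCb : ((f b : ℕ)) / m = k - 1 := by
          have := hb.2
          rw [hC_def] at this
          simpa [SimpleGraph.Coloring.mk, Fin.mk.injEq] using congrArg Fin.val this
        have hga : m * (k - 1) ≤ (f a : ℕ) := by
          calc m * (k - 1) = m * ((f a : ℕ) / m) := by rw [hCa]
            _ ≤ (f a : ℕ) := Nat.mul_div_le _ _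
        have hgb : m * (k - 1) ≤ (f b : ℕ) := by
          calc m * (k - 1) = m * ((f b : ℕ) / m) := by rw [hCb]
            _ ≤ (f b : ℕ) := Nat.mul_div_le _ _
        have hab' : (f a : ℕ) - m * (k - 1) = (f b : ℕ) - m * (k - 1) := hab
        have : ((f a : ℕ)) = ((f b : ℕ)) := by omega
        exact hf (Fin.val_injective this)
    rw [Finset.card_range] at hTcard
    omega
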